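/- Let q be a prime power. In the formal power series ring ℚ⟦X⟧ with the coefficientwise (product) topology, the family of power series ((1 − X^{deg π})^{−1}), indexed by the monic irreducible polynomials π ∈ 𝔽_q[T], is multipliable, and its product equals (1 − qX)^{−1}. Equivalently, including one additional factor (1 − X)^{−1} for the place at infinity, the product over all places of 𝔽_q(T) of (1 − X^{deg P})^{−1} equals the Hasse–Weil zeta function Z(X) = 1/((1−X)(1−qX)) of the projective line over 𝔽_q. -/

import Mathlib

noncomputable section

/-- Monic irreducible polynomials over `Fq`: the finite places of `𝔽_q(T)`. -/
def MonicIrr (Fq : Type) [Field Fq] : Type := {π : Polynomial Fq // π.Monic ∧ Irreducible π}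

/-- The places of the rational function field `𝔽_q(T)`: the monic irreducible polynomials
together with one place at infinity (`none`). -/
def Places (Fq : Type) [Field Fq] : Type := Option (MonicIrr Fq)

/-- The degree of a place of `𝔽_q(T)`; the place at infinity has degree 1. -/
def placeDeg {Fq : Type} [Field Fq] : Places Fq → ℕ
  | none => 1
  | some π => π.1.natDegree

/-- The coefficientwise (product) topology on `ℚ⟦X⟧`. -/
instance : TopologicalSpace (PowerSeries ℚ) :=
  letI : TopologicalSpace ℚ := ⊥
  TopologicalSpace.induced (fun f (n : ℕ) => PowerSeries.coeff (R := ℚ) n f) inferInstance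

namespace Stmt10Aux

open PowerSeries Filter

theorem hasProd_iff_coeff {ι : Type} (f : ι → PowerSeries ℚ) (a : PowerSeries ℚ) :
    HasProd f a ↔ ∀ n : ℕ, ∀ᶠ S : Finset ι in atTop,
      PowerSeries.coeff (R := ℚ) n (∏ i ∈ S, f i) = PowerSeries.coeff (R := ℚ) n a := by
  letI : TopologicalSpace ℚ := ⊥
  haveI : DiscreteTopology ℚ := ⟨rfl⟩
  rw [HasProd, nhds_induced, tendsto_comap_iff, tendsto_pi_nhds]
  refine forall_congr' fun n => ?_
  rw [nhds_discrete, tendsto_pure]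
  rfl

theorem t2 : T2Space (PowerSeries ℚ) := by
  letI : TopologicalSpace ℚ := ⊥
  haveI : DiscreteTopology ℚ := ⟨rfl⟩
  exact Topology.IsEmbedding.t2Space (f := fun f (n : ℕ) => PowerSeries.coeff (R := ℚ) n f)
    ⟨⟨rfl⟩, fun x y h => PowerSeries.ext fun n => congrFun h n⟩

open Polynomial

variable {Fq : Type} [Field Fq] [Fintype Fq]

instance : DecidableEq (MonicIrr Fq) := Classical.decEq _
instance : DecidableEq (Places Fq) := Classical.decEq _

/-- Monic polys of degree `n` whose monic-irreducible divisors all lie in `S`. -/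
def DSet (S : Finset (MonicIrr Fq)) (n : ℕ) : Set (Polynomial Fq) :=
  {f | f.Monic ∧ f.natDegree = n ∧ ∀ π : MonicIrr Fq, π.1 ∣ f → π ∈ S}

theorem finite_natDegree_le (n : ℕ) : {f : Polynomial Fq | f.natDegree ≤ n}.Finite := by
  apply Set.Finite.of_finite_image (f := fun f (i : Fin (n+1)) => f.coeff i.1) (Set.toFinite _)
  intro f hf g hg h
  ext i
  rcases le_or_gt i n with hi | hi
  · exact congrFun h ⟨i, Nat.lt_succ_of_le hi⟩
  · rw [coeff_eq_zero_of_natDegree_lt (lt_of_le_of_lt hf hi),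
      coeff_eq_zero_of_natDegree_lt (lt_of_le_of_lt hg hi)]

theorem DSet_finite (S : Finset (MonicIrr Fq)) (n : ℕ) : (DSet S n).Finite :=
  (finite_natDegree_le n).subset fun _ hf => le_of_eq hf.2.1

theorem DSet_zero (S : Finset (MonicIrr Fq)) : DSet S 0 = {1} := by
  ext f
  constructor
  · rintro ⟨hm, hd, -⟩
    exact hm.natDegree_eq_zero.mp hd
  · rintro rfl
    exact ⟨monic_one, natDegree_one, fun π hπ => absurd (isUnit_of_dvd_one hπ) π.2.2.not_isUnit⟩

theorem DSet_eq_empty (S : Finset (MonicIrr Fq)) {n : ℕ} (hn : n ≠ 0)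
    (h : ∀ π : MonicIrr Fq, π ∈ S → n < π.1.natDegree) : DSet S n = ∅ := by
  ext f
  simp only [Set.mem_empty_iff_false, iff_false]
  rintro ⟨hm, hd, hdvd⟩
  obtain ⟨g, hgm, hgi, hgd⟩ := f.exists_monic_irreducible_factor
    (not_isUnit_of_natDegree_pos f (hd ▸ Nat.pos_of_ne_zero hn))
  have := h ⟨g, hgm, hgi⟩ (hdvd _ hgd)
  exact absurd (hd ▸ natDegree_le_of_dvd hgd hm.ne_zero) (by simpa using this.not_ge)

theorem DSet_insert_of_lt {S : Finset (MonicIrr Fq)} {π : MonicIrr Fq} {n : ℕ}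
    (h : n < π.1.natDegree) : DSet (insert π S) n = DSet S n := by
  ext f
  refine and_congr_right fun hm => and_congr_right fun hd => forall_congr' fun ρ => ?_
  constructor
  · intro h1 hdvd
    rcases Finset.mem_insert.mp (h1 hdvd) with rfl | hS
    · exact absurd (hd ▸ natDegree_le_of_dvd hdvd hm.ne_zero) h.not_ge
    · exact hS
  · exact fun h1 hdvd => Finset.mem_insert_of_mem (h1 hdvd)

theorem DSet_insert_of_le {S : Finset (MonicIrr Fq)} {π : MonicIrr Fq} (hπS : π ∉ S) {n : ℕ}
    (h : π.1.natDegree ≤ n) :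
    DSet (insert π S) n = DSet S n ∪ (fun g => π.1 * g) '' DSet (insert π S) (n - π.1.natDegree) := by
  have hπ0 : π.1 ≠ 0 := π.2.1.ne_zero
  ext f
  constructor
  · rintro ⟨hm, hd, hdvd⟩
    by_cases hdf : π.1 ∣ f
    · obtain ⟨g, rfl⟩ := hdf
      have hg : g.Monic := π.2.1.of_mul_monic_left hm
      refine Or.inr ⟨g, ⟨hg, ?_, fun ρ hρ => hdvd ρ (hρ.mul_left _)⟩, rfl⟩
      rw [natDegree_mul hπ0 hg.ne_zero] at hd
      omega
    · refine Or.inl ⟨hm, hd, fun ρ hρ => ?_⟩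
      rcases Finset.mem_insert.mp (hdvd ρ hρ) with rfl | hS
      · exact absurd hρ hdf
      · exact hS
  · rintro (⟨hm, hd, hdvd⟩ | ⟨g, ⟨hgm, hgd, hgdvd⟩, rfl⟩)
    · exact ⟨hm, hd, fun ρ hρ => Finset.mem_insert_of_mem (hdvd ρ hρ)⟩
    · refine ⟨π.2.1.mul hgm, ?_, fun ρ hρ => ?_⟩
      · rw [natDegree_mul hπ0 hgm.ne_zero, hgd]; omega
      · rcases (UniqueFactorizationMonoid.irreducible_iff_prime.mp ρ.2.2).2.2 _ _ hρ with h1 | h1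
        · have : ρ.1 = π.1 :=
            eq_of_monic_of_associated ρ.2.1 π.2.1 (ρ.2.2.associated_of_dvd π.2.2 h1)
          exact Finset.mem_insert.mpr (Or.inl (Subtype.ext this))
        · exact hgdvd ρ h1

theorem DSet_card_insert {S : Finset (MonicIrr Fq)} {π : MonicIrr Fq} (hπS : π ∉ S) {n : ℕ}
    (h : π.1.natDegree ≤ n) :
    (DSet (insert π S) n).ncard
      = (DSet S n).ncard + (DSet (insert π S) (n - π.1.natDegree)).ncard := by
  have disj : Disjoint (DSet S n)
      ((fun g => π.1 * g) '' DSet (insert π S) (n - π.1.natDegree)) := by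
    rw [Set.disjoint_left]
    rintro f ⟨hm, hd, hdvd⟩ ⟨g, hg, rfl⟩
    exact hπS (hdvd π (Dvd.intro g rfl))
  rw [DSet_insert_of_le hπS h,
    Set.ncard_union_eq disj (DSet_finite _ _) ((DSet_finite _ _).image _),
    Set.ncard_image_of_injective _ (mul_right_injective₀ π.2.1.ne_zero)]

theorem finite_monicIrr_le (n : ℕ) : {π : MonicIrr Fq | π.1.natDegree ≤ n}.Finite := by
  have : {π : MonicIrr Fq | π.1.natDegree ≤ n}
      = (Subtype.val : MonicIrr Fq → Polynomial Fq) ⁻¹' {f | f.natDegree ≤ n} := rfl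
  rw [this]
  exact Set.Finite.preimage (Set.injOn_of_injective Subtype.val_injective) (finite_natDegree_le n)

/-- The finite set of monic irreducibles of degree at most `n`. -/
def S0 (Fq : Type) [Field Fq] [Fintype Fq] (n : ℕ) : Finset (MonicIrr Fq) :=
  (finite_monicIrr_le n).toFinset

theorem mem_S0 {n : ℕ} {π : MonicIrr Fq} : π ∈ S0 Fq n ↔ π.1.natDegree ≤ n :=
  Set.Finite.mem_toFinset _

theorem DSet_card_of_superset {S : Finset (MonicIrr Fq)} {n : ℕ}
    (h : ∀ π : MonicIrr Fq, π.1.natDegree ≤ n → π ∈ S) :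
    (DSet S n).ncard = Fintype.card Fq ^ n := by
  have : DSet S n = {f : Polynomial Fq | f.Monic ∧ f.natDegree = n} := by
    ext f
    refine ⟨fun hf => ⟨hf.1, hf.2.1⟩, fun hf => ⟨hf.1, hf.2, fun π hπ => ?_⟩⟩
    exact h π (hf.2 ▸ natDegree_le_of_dvd hπ hf.1.ne_zero)
  rw [this, ← Nat.card_coe_set_eq]
  calc Nat.card {f : Polynomial Fq | f.Monic ∧ f.natDegree = n}
      = Nat.card {f : Polynomial Fq // f.Monic ∧ f.natDegree = n} := rfl
    _ = Nat.card (Polynomial.degreeLT Fq n) := Nat.card_congr (Polynomial.monicEquivDegreeLT n)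
    _ = Nat.card (Fin n → Fq) := Nat.card_congr (Polynomial.degreeLTEquiv Fq n).toEquiv
    _ = Fintype.card Fq ^ n := by
        rw [Nat.card_eq_fintype_card, Fintype.card_pi]
        simp

theorem N_S0 {b n : ℕ} (hb : b ≤ n) :
    ((DSet (S0 Fq n) b).ncard : ℚ) = (Fintype.card Fq : ℚ) ^ b := by
  rw [DSet_card_of_superset (fun π hπ => mem_S0.mpr (hπ.trans hb))]
  push_cast
  rfl

theorem coeff_one_sub_pow_mul (d : ℕ) (A : PowerSeries ℚ) (n : ℕ) :
    PowerSeries.coeff (R := ℚ) n ((1 - PowerSeries.X ^ d) * A)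
      = PowerSeries.coeff (R := ℚ) n A - if d ≤ n then PowerSeries.coeff (R := ℚ) (n - d) A else 0 := by
  rw [sub_mul, one_mul, map_sub, PowerSeries.coeff_X_pow_mul']

theorem constCoeff_one_sub_pow {d : ℕ} (hd : d ≠ 0) :
    PowerSeries.constantCoeff (R := ℚ) (1 - PowerSeries.X ^ d) ≠ 0 := by
  simp [zero_pow hd]

theorem prod_eq (S : Finset (MonicIrr Fq)) :
    (∏ π ∈ S, ((1 - PowerSeries.X ^ π.1.natDegree)⁻¹ : PowerSeries ℚ))
      = PowerSeries.mk fun n => ((DSet S n).ncard : ℚ) := by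
  induction S using Finset.induction_on with
  | empty =>
    rw [Finset.prod_empty]
    ext n
    rw [PowerSeries.coeff_mk, PowerSeries.coeff_one]
    rcases n with - | n
    · simp [DSet_zero]
    · rw [DSet_eq_empty _ (Nat.succ_ne_zero n) (fun π hπ => absurd hπ (Finset.notMem_empty π))]
      simp
  | @insert a S ha ih =>
    have hd : a.1.natDegree ≠ 0 := a.2.2.natDegree_pos.ne'
    rw [Finset.prod_insert ha, ih, mul_comm]
    symm
    rw [PowerSeries.eq_mul_inv_iff_mul_eq (constCoeff_one_sub_pow hd), mul_comm]
    ext n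
    rw [coeff_one_sub_pow_mul, PowerSeries.coeff_mk, PowerSeries.coeff_mk]
    split_ifs with h
    · rw [PowerSeries.coeff_mk, DSet_card_insert ha h]
      push_cast
      ring
    · rw [DSet_insert_of_lt (lt_of_not_ge h), PowerSeries.coeff_mk]
      ring

theorem one_sub_pow_inv_eq (π : MonicIrr Fq) :
    ((1 - PowerSeries.X ^ π.1.natDegree)⁻¹ : PowerSeries ℚ)
      = PowerSeries.mk fun n => ((DSet {π} n).ncard : ℚ) := by
  rw [← prod_eq {π}, Finset.prod_singleton]

theorem coeff_tail_factor {π : MonicIrr Fq} {n j : ℕ} (hj : j ≤ n) (hd : n < π.1.natDegree) :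
    PowerSeries.coeff (R := ℚ) j ((1 - PowerSeries.X ^ π.1.natDegree)⁻¹ : PowerSeries ℚ)
      = if j = 0 then 1 else 0 := by
  rw [one_sub_pow_inv_eq, PowerSeries.coeff_mk]
  rcases eq_or_ne j 0 with rfl | hj0
  · simp [DSet_zero]
  · rw [if_neg hj0, DSet_eq_empty _ hj0]
    · simp
    · intro ρ hρ
      rw [Finset.mem_singleton] at hρ
      subst hρ
      omega

theorem coeff_mul_tail {A B : PowerSeries ℚ} {n : ℕ}
    (hB : ∀ j ≤ n, PowerSeries.coeff (R := ℚ) j B = if j = 0 then 1 else 0) :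
    PowerSeries.coeff (R := ℚ) n (A * B) = PowerSeries.coeff (R := ℚ) n A := by
  rw [PowerSeries.coeff_mul, Finset.sum_eq_single (n, 0)]
  · rw [hB 0 (Nat.zero_le n), if_pos rfl, mul_one]
  · rintro ⟨a, b⟩ hab hne
    rw [Finset.HasAntidiagonal.mem_antidiagonal] at hab
    have hb : b ≠ 0 := by rintro rfl; exact hne (by simp [← hab])
    rw [hB b (by omega), if_neg hb, mul_zero]
  · intro h
    exact absurd (Finset.HasAntidiagonal.mem_antidiagonal.mpr (by omega)) h

theorem coeff_prod_tail {ι : Type} {T : Finset ι} {g : ι → PowerSeries ℚ} {n : ℕ}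
    (h : ∀ i ∈ T, ∀ j ≤ n, PowerSeries.coeff (R := ℚ) j (g i) = if j = 0 then 1 else 0) :
    ∀ j ≤ n, PowerSeries.coeff (R := ℚ) j (∏ i ∈ T, g i) = if j = 0 then 1 else 0 := by
  classical
  induction T using Finset.induction_on with
  | empty => intro j _; rw [Finset.prod_empty, PowerSeries.coeff_one]
  | @insert a T ha ih =>
    intro j hj
    have hTa := fun i hi => h i (Finset.mem_insert_of_mem hi)
    rw [Finset.prod_insert ha,
      coeff_mul_tail (fun j' hj' => ih hTa j' (hj'.trans hj))]
    exact h a (Finset.mem_insert_self a T) j hj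

theorem constCoeff_one_sub_C_mul (r : ℚ) :
    PowerSeries.constantCoeff (R := ℚ) (1 - PowerSeries.C (R := ℚ) r * PowerSeries.X) ≠ 0 := by
  simp

theorem inv_one_sub_C_mul (r : ℚ) :
    ((1 - PowerSeries.C (R := ℚ) r * PowerSeries.X)⁻¹ : PowerSeries ℚ)
      = PowerSeries.mk fun n => r ^ n := by
  rw [PowerSeries.inv_eq_iff_mul_eq_one (constCoeff_one_sub_C_mul r)]
  ext n
  rw [mul_sub, mul_one, map_sub, ← mul_assoc, mul_comm (PowerSeries.mk fun n => r ^ n),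
    mul_assoc, PowerSeries.coeff_C_mul]
  rcases n with - | n
  · simp [PowerSeries.coeff_zero_mul_X]
  · rw [PowerSeries.coeff_succ_mul_X, PowerSeries.coeff_mk, PowerSeries.coeff_mk,
      PowerSeries.coeff_one]
    simp [pow_succ, mul_comm]

theorem inv_one_sub_X :
    ((1 - PowerSeries.X)⁻¹ : PowerSeries ℚ) = PowerSeries.mk fun _ => 1 := by
  have := inv_one_sub_C_mul 1
  simpa using this

/-- The Euler product over the finite places. -/
theorem hasProd_finite :
    HasProd (fun π : MonicIrr Fq => ((1 - PowerSeries.X ^ π.1.natDegree)⁻¹ : PowerSeries ℚ))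
      (1 - PowerSeries.C (R := ℚ) (Fintype.card Fq : ℚ) * PowerSeries.X)⁻¹ := by
  rw [hasProd_iff_coeff, inv_one_sub_C_mul]
  intro n
  filter_upwards [eventually_ge_atTop (S0 Fq n)] with S hS
  rw [← Finset.prod_sdiff hS, mul_comm,
    coeff_mul_tail (coeff_prod_tail fun π hπ j hj =>
      coeff_tail_factor hj (by
        have := (Finset.mem_sdiff.mp hπ).2
        rw [mem_S0] at this
        omega)),
    prod_eq, PowerSeries.coeff_mk, PowerSeries.coeff_mk, N_S0 le_rfl]

/-- The Euler product over all places. -/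
theorem hasProd_places :
    HasProd (fun P : Places Fq => ((1 - PowerSeries.X ^ placeDeg P)⁻¹ : PowerSeries ℚ))
      ((1 - PowerSeries.X)⁻¹ * PowerSeries.mk fun n => (Fintype.card Fq : ℚ) ^ n) := by
  rw [hasProd_iff_coeff]
  intro n
  filter_upwards [eventually_ge_atTop
    ((Finset.insertNone (S0 Fq n) : Finset (Option (MonicIrr Fq))) : Finset (Places Fq))]
    with T hT
  have hnone : (none : Places Fq) ∈ T := hT (by simp)
  have hE : S0 Fq n ⊆ Finset.eraseNone (T : Finset (Option (MonicIrr Fq))) := fun π hπ =>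
    Finset.mem_eraseNone.mpr (hT (Finset.some_mem_insertNone.mpr hπ))
  have hsplit : (∏ P ∈ T, ((1 - PowerSeries.X ^ placeDeg P)⁻¹ : PowerSeries ℚ))
      = (1 - PowerSeries.X)⁻¹
        * ∏ π ∈ Finset.eraseNone (T : Finset (Option (MonicIrr Fq))),
            ((1 - PowerSeries.X ^ π.1.natDegree)⁻¹ : PowerSeries ℚ) := by
    have hTT : T = Finset.insertNone (Finset.eraseNone T) := by
      exact ((Finset.insertNone_eraseNone (s := T)).trans (Finset.insert_eq_self.mpr hnone)).symm
    conv_lhs => rw [hTT]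
    refine Eq.trans (Finset.prod_insertNone
      (fun P : Option (MonicIrr Fq) => ((1 - PowerSeries.X ^ placeDeg P)⁻¹ : PowerSeries ℚ))
      (Finset.eraseNone T)) ?_
    congr 1
    rw [show placeDeg (none : Places Fq) = 1 from rfl, pow_one]
  rw [hsplit, ← Finset.prod_sdiff hE, mul_comm (∏ _π ∈ _ \ _, _), ← mul_assoc,
    coeff_mul_tail (coeff_prod_tail fun π hπ j hj =>
      coeff_tail_factor hj (by
        have := (Finset.mem_sdiff.mp hπ).2
        rw [mem_S0] at this
        omega)),
    prod_eq, inv_one_sub_X, PowerSeries.coeff_mul, PowerSeries.coeff_mul]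
  refine Finset.sum_congr rfl fun p hp => ?_
  rw [Finset.HasAntidiagonal.mem_antidiagonal] at hp
  simp only [PowerSeries.coeff_mk]
  rw [N_S0 (show p.2 ≤ n by omega)]

end Stmt10Aux

theorem stmt10
    (q : ℕ) (hq : IsPrimePow q)
    (Fq : Type) [Field Fq] [Fintype Fq] (hFq : Fintype.card Fq = q) :
    (Multipliable fun π : MonicIrr Fq =>
        ((1 - PowerSeries.X ^ π.1.natDegree)⁻¹ : PowerSeries ℚ)) ∧
    (∏' π : MonicIrr Fq, ((1 - PowerSeries.X ^ π.1.natDegree)⁻¹ : PowerSeries ℚ))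
        = (1 - PowerSeries.C (R := ℚ) (q : ℚ) * PowerSeries.X)⁻¹ ∧
    (Multipliable fun P : Places Fq =>
        ((1 - PowerSeries.X ^ placeDeg P)⁻¹ : PowerSeries ℚ)) ∧
    (∏' P : Places Fq, ((1 - PowerSeries.X ^ placeDeg P)⁻¹ : PowerSeries ℚ))
        = ((1 - PowerSeries.X) * (1 - PowerSeries.C (R := ℚ) (q : ℚ) * PowerSeries.X))⁻¹ := by
  haveI : T2Space (PowerSeries ℚ) := Stmt10Aux.t2
  subst hFq
  have h1 := Stmt10Aux.hasProd_finite (Fq := Fq)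
  have h2 := Stmt10Aux.hasProd_places (Fq := Fq)
  have hZ : ((1 - PowerSeries.X) * (1 - PowerSeries.C (R := ℚ) (Fintype.card Fq : ℚ)
        * PowerSeries.X))⁻¹
      = (1 - PowerSeries.X)⁻¹
        * PowerSeries.mk fun n => (Fintype.card Fq : ℚ) ^ n := by
    rw [PowerSeries.mul_inv_rev, Stmt10Aux.inv_one_sub_C_mul, mul_comm]
  exact ⟨h1.multipliable, h1.tprod_eq, h2.multipliable, by rw [hZ]; exact h2.tprod_eq⟩

end
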